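/- For all real numbers a, b, c one has det(a·𝐄₁ + b·𝐄₂ + c·𝐄₃) = (9/16)·(a² + b² + c²)². Consequently, if (a,b,c) ≠ (0,0,0) then the complex 4×4 matrix a·𝐄₁ + b·𝐄₂ + c·𝐄₃ is invertible, so the only vector Ψ ∈ ℂ⁴ with (a·𝐄₁ + b·𝐄₂ + c·𝐄₃)Ψ = 0 is Ψ = 0. -/

import Mathlib

noncomputable section

open Matrix Complex

/-- The spin representation image 𝐄₁ of E₁. -/
def BE1 : Matrix (Fin 4) (Fin 4) ℂ :=
  (1/2 : ℂ) •
    !![0, Complex.I, -(Real.sqrt 3 : ℂ), Complex.I;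
       Complex.I, 0, -Complex.I, -(Real.sqrt 3 : ℂ);
       (Real.sqrt 3 : ℂ), -Complex.I, 0, -Complex.I;
       Complex.I, (Real.sqrt 3 : ℂ), -Complex.I, 0]

/-- The spin representation image 𝐄₂ of E₂. -/
def BE2 : Matrix (Fin 4) (Fin 4) ℂ :=
  (1/2 : ℂ) •
    !![Complex.I * (Real.sqrt 3 : ℂ), -1, 0, -1;
       1, Complex.I * (Real.sqrt 3 : ℂ), -1, 0;
       0, 1, -Complex.I * (Real.sqrt 3 : ℂ), 1;
       1, 0, -1, -Complex.I * (Real.sqrt 3 : ℂ)]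

/-- The spin representation image 𝐄₃ of E₃. -/
def BE3 : Matrix (Fin 4) (Fin 4) ℂ :=
  (1/2 : ℂ) •
    !![2 * Complex.I, 0, Complex.I, 0;
       0, -2 * Complex.I, 0, Complex.I;
       Complex.I, 0, 2 * Complex.I, 0;
       0, Complex.I, 0, -2 * Complex.I]

/-- Cofactor expansion of a 4×4 determinant along the first row. -/
lemma det_fin_four' (M : Matrix (Fin 4) (Fin 4) ℂ) :
    M.det =
      M 0 0 * (M 1 1 * M 2 2 * M 3 3 - M 1 1 * M 2 3 * M 3 2 - M 1 2 * M 2 1 * M 3 3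
        + M 1 2 * M 2 3 * M 3 1 + M 1 3 * M 2 1 * M 3 2 - M 1 3 * M 2 2 * M 3 1)
      - M 0 1 * (M 1 0 * M 2 2 * M 3 3 - M 1 0 * M 2 3 * M 3 2 - M 1 2 * M 2 0 * M 3 3
        + M 1 2 * M 2 3 * M 3 0 + M 1 3 * M 2 0 * M 3 2 - M 1 3 * M 2 2 * M 3 0)
      + M 0 2 * (M 1 0 * M 2 1 * M 3 3 - M 1 0 * M 2 3 * M 3 1 - M 1 1 * M 2 0 * M 3 3
        + M 1 1 * M 2 3 * M 3 0 + M 1 3 * M 2 0 * M 3 1 - M 1 3 * M 2 1 * M 3 0)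
      - M 0 3 * (M 1 0 * M 2 1 * M 3 2 - M 1 0 * M 2 2 * M 3 1 - M 1 1 * M 2 0 * M 3 2
        + M 1 1 * M 2 2 * M 3 0 + M 1 2 * M 2 0 * M 3 1 - M 1 2 * M 2 1 * M 3 0) := by
  rw [Matrix.det_succ_row_zero]
  simp [Fin.sum_univ_succ, Matrix.det_fin_three, Matrix.submatrix_apply, Fin.succAbove_zero, Fin.succ_succAbove_zero, Fin.succ_succAbove_succ,
    show (Fin.succAbove 1 2 : Fin 4) = 3 from rfl, show (Fin.succAbove 2 2 : Fin 4) = 3 from rfl, show (Fin.succAbove 3 2 : Fin 4) = 2 from rfl]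
  ring

set_option maxHeartbeats 4000000 in
lemma det_key (a b c : ℝ) :
    ((a : ℂ) • BE1 + (b : ℂ) • BE2 + (c : ℂ) • BE3).det =
      (9/16 : ℂ) * ((a : ℂ)^2 + (b : ℂ)^2 + (c : ℂ)^2)^2 := by
  have hs2 : ((Real.sqrt 3 : ℝ) : ℂ) ^ 2 = 3 := by
    rw [← Complex.ofReal_pow, Real.sq_sqrt (by norm_num : (0:ℝ) ≤ 3)]; norm_num
  have hs3 : ((Real.sqrt 3 : ℝ) : ℂ) ^ 3 = 3 * ((Real.sqrt 3 : ℝ) : ℂ) := by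
    rw [pow_succ, hs2]
  have hs4 : ((Real.sqrt 3 : ℝ) : ℂ) ^ 4 = 9 := by
    rw [show (4:ℕ)=2*2 from rfl, pow_mul, hs2]; norm_num
  have hI2 : Complex.I ^ 2 = -1 := Complex.I_sq
  have hI3 : Complex.I ^ 3 = -Complex.I := by rw [pow_succ, hI2]; ring
  have hI4 : Complex.I ^ 4 = 1 := by rw [show (4:ℕ)=2*2 from rfl, pow_mul, hI2]; norm_num
  rw [det_fin_four']
  simp [BE1, BE2, BE3]
  ring_nf
  simp only [hs2, hs3, hs4, hI2, hI3, hI4]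
  ring

/-- det(a𝐄₁ + b𝐄₂ + c𝐄₃) = (9/16)(a² + b² + c²)², so for (a,b,c) ≠ 0
the matrix is invertible and the only Ψ ∈ ℂ⁴ it kills is Ψ = 0. -/
theorem stmt16 : ∀ a b c : ℝ,
    ((a : ℂ) • BE1 + (b : ℂ) • BE2 + (c : ℂ) • BE3).det =
      (9/16 : ℂ) * ((a : ℂ)^2 + (b : ℂ)^2 + (c : ℂ)^2)^2 ∧
    ((a, b, c) ≠ ((0 : ℝ), (0 : ℝ), (0 : ℝ)) →
      ∀ Ψ : Fin 4 → ℂ,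
        ((a : ℂ) • BE1 + (b : ℂ) • BE2 + (c : ℂ) • BE3).mulVec Ψ = 0 → Ψ = 0) := by
  intro a b c
  refine ⟨det_key a b c, fun h Ψ hΨ => ?_⟩
  set M := (a : ℂ) • BE1 + (b : ℂ) • BE2 + (c : ℂ) • BE3 with hM
  have hr : a^2 + b^2 + c^2 ≠ 0 := by
    intro h0
    apply h
    have ha : a = 0 := by nlinarith [sq_nonneg a, sq_nonneg b, sq_nonneg c]
    have hb : b = 0 := by nlinarith [sq_nonneg a, sq_nonneg b, sq_nonneg c]
    have hc : c = 0 := by nlinarith [sq_nonneg a, sq_nonneg b, sq_nonneg c]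
    simp [ha, hb, hc]
  have hne : ((a:ℂ)^2 + (b:ℂ)^2 + (c:ℂ)^2) ≠ 0 := by
    intro h0
    apply hr
    have : ((a^2 + b^2 + c^2 : ℝ) : ℂ) = 0 := by push_cast; exact h0
    exact_mod_cast this
  have hdet : M.det ≠ 0 := by
    rw [det_key a b c]
    exact mul_ne_zero (by norm_num) (pow_ne_zero _ hne)
  have hinv := Matrix.nonsing_inv_mul M (isUnit_iff_ne_zero.mpr hdet)
  calc Ψ = (M⁻¹ * M).mulVec Ψ := by rw [hinv, Matrix.one_mulVec]
    _ = M⁻¹.mulVec (M.mulVec Ψ) := by rw [Matrix.mulVec_mulVec]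
    _ = 0 := by rw [hΨ, Matrix.mulVec_zero]
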